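/- Soundness of the ⊥-introduction rule: if Φ₁ maps realizers of Γ₁ to realizers of t:C and Φ₂ maps realizers of Γ₂ to realizers of t:¬C (uniformly over all models), then no model realizes Γ₁∪Γ₂; i.e., for every model M and every γ̄, not M ⊩_{γ̄} Γ₁∪Γ₂. Equivalently, any operator into IT_N(⊥) = {tt} vacuously maps realizers of Γ₁∪Γ₂ to realizers of ⊥. -/
import Mathlib


namespace ITSem

inductive Concept (NC NR : Type) : Type where
  | atom : NC → Concept NC NR
  | neg : Concept NC NR → Concept NC NR
  | inter : Concept NC NR → Concept NC NR → Concept NC NR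
  | union : Concept NC NR → Concept NC NR → Concept NC NR
  | ex : NR → Concept NC NR → Concept NC NR
  | all : NR → Concept NC NR → Concept NC NR

inductive Formula (N NC NR : Type) : Type where
  | bot : Formula N NC NR
  | role : N → N → NR → Formula N NC NR
  | conc : N → Concept NC NR → Formula N NC NR
  | subsum : NC → Concept NC NR → Formula N NC NR

structure Model (N NC NR : Type) where
  D : Type
  dNonempty : Nonempty D
  indiv : N → D
  cname : NC → Set D
  rel : NR → D → D → Prop

def Model.interp {N NC NR : Type} (M : Model N NC NR) : Concept NC NR → Set M.D
  | .atom A => M.cname A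
  | .neg C => (M.interp C)ᶜ
  | .inter C D => M.interp C ∩ M.interp D
  | .union C D => M.interp C ∪ M.interp D
  | .ex R C => {x | ∃ y, M.rel R x y ∧ y ∈ M.interp C}
  | .all R C => {x | ∀ y, M.rel R x y → y ∈ M.interp C}

def Model.valid {N NC NR : Type} (M : Model N NC NR) : Formula N NC NR → Prop
  | .bot => False
  | .role c d R => M.rel R (M.indiv c) (M.indiv d)
  | .conc c C => M.indiv c ∈ M.interp C
  | .subsum A C => M.cname A ⊆ M.interp C

def ITc (N NC NR : Type) : Concept NC NR → Type
  | .atom _ => Unit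
  | .neg _ => Unit
  | .inter C D => ITc N NC NR C × ITc N NC NR D
  | .union C D => ITc N NC NR C ⊕ ITc N NC NR D
  | .ex _ C => N × ITc N NC NR C
  | .all _ C => N → ITc N NC NR C

def ITf (N NC NR : Type) : Formula N NC NR → Type
  | .bot => Unit
  | .role _ _ _ => Unit
  | .conc _ C => ITc N NC NR C
  | .subsum _ C => N → ITc N NC NR C

def realc {N NC NR : Type} (M : Model N NC NR) :
    (C : Concept NC NR) → N → ITc N NC NR C → Prop
  | .atom A, c, _ => M.indiv c ∈ M.cname A
  | .neg C, c, _ => M.indiv c ∈ M.interp (.neg C)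
  | .inter C D, c, η => realc M C c η.1 ∧ realc M D c η.2
  | .union C D, c, η =>
      match η with
      | Sum.inl α => realc M C c α
      | Sum.inr β => realc M D c β
  | .ex R C, c, η => M.rel R (M.indiv c) (M.indiv η.1) ∧ realc M C η.1 η.2
  | .all R C, c, φ =>
      M.indiv c ∈ M.interp (.all R C) ∧
      ∀ d, M.rel R (M.indiv c) (M.indiv d) → realc M C d (φ d)

def real {N NC NR : Type} (M : Model N NC NR) :
    (K : Formula N NC NR) → ITf N NC NR K → Prop
  | .bot, _ => False
  | .role c d R, _ => M.rel R (M.indiv c) (M.indiv d)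
  | .conc c C, η => realc M C c η
  | .subsum A C, φ =>
      M.cname A ⊆ M.interp C ∧
      ∀ d, M.indiv d ∈ M.cname A → realc M C d (φ d)

def ITl (N NC NR : Type) : List (Formula N NC NR) → Type
  | [] => PUnit
  | K :: Γ => ITf N NC NR K × ITl N NC NR Γ

def reall {N NC NR : Type} (M : Model N NC NR) :
    (Γ : List (Formula N NC NR)) → ITl N NC NR Γ → Prop
  | [], _ => True
  | K :: Γ, η => real M K η.1 ∧ reall M Γ η.2

def splitIT {N NC NR : Type} :
    (Γ₁ Γ₂ : List (Formula N NC NR)) → ITl N NC NR (Γ₁ ++ Γ₂) →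
      ITl N NC NR Γ₁ × ITl N NC NR Γ₂
  | [], _, γ => (PUnit.unit, γ)
  | _ :: Γ₁, Γ₂, γ => ((γ.1, (splitIT Γ₁ Γ₂ γ.2).1), (splitIT Γ₁ Γ₂ γ.2).2)

theorem realc_sound {N NC NR : Type} (M : Model N NC NR) :
    ∀ (C : Concept NC NR) (c : N) (η : ITc N NC NR C),
      realc M C c η → M.indiv c ∈ M.interp C
  | .atom _, _, _, h => h
  | .neg _, _, _, h => h
  | .inter C D, c, η, h => ⟨realc_sound M C c η.1 h.1, realc_sound M D c η.2 h.2⟩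
  | .union C D, c, Sum.inl α, h => Or.inl (realc_sound M C c α h)
  | .union C D, c, Sum.inr β, h => Or.inr (realc_sound M D c β h)
  | .ex R C, c, η, h => ⟨M.indiv η.1, h.1, realc_sound M C η.1 η.2 h.2⟩
  | .all _ _, _, _, h => h.1

theorem reall_split {N NC NR : Type} (M : Model N NC NR) :
    ∀ (Γ₁ Γ₂ : List (Formula N NC NR)) (γ : ITl N NC NR (Γ₁ ++ Γ₂)),
      reall M (Γ₁ ++ Γ₂) γ →
        reall M Γ₁ (splitIT Γ₁ Γ₂ γ).1 ∧ reall M Γ₂ (splitIT Γ₁ Γ₂ γ).2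
  | [], _, γ, h => ⟨trivial, h⟩
  | K :: Γ₁, Γ₂, γ, h =>
      let ih := reall_split M Γ₁ Γ₂ γ.2 h.2
      ⟨⟨h.1, ih.1⟩, ih.2⟩

theorem bot_intro_sound {N NC NR : Type} (Γ₁ Γ₂ : List (Formula N NC NR)) (t : N)
    (C : Concept NC NR)
    (Φ₁ : ITl N NC NR Γ₁ → ITc N NC NR C)
    (Φ₂ : ITl N NC NR Γ₂ → ITc N NC NR (.neg C))
    (h₁ : ∀ (M : Model N NC NR) γ₁, reall M Γ₁ γ₁ → realc M C t (Φ₁ γ₁))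
    (h₂ : ∀ (M : Model N NC NR) γ₂, reall M Γ₂ γ₂ → realc M (.neg C) t (Φ₂ γ₂)) :
    (∀ (M : Model N NC NR) (γ : ITl N NC NR (Γ₁ ++ Γ₂)), ¬ reall M (Γ₁ ++ Γ₂) γ) ∧
    (∀ (Φ : ITl N NC NR (Γ₁ ++ Γ₂) → ITf N NC NR .bot)
       (M : Model N NC NR) (γ : ITl N NC NR (Γ₁ ++ Γ₂)),
         reall M (Γ₁ ++ Γ₂) γ → real M .bot (Φ γ)) := by
  have key : ∀ (M : Model N NC NR) (γ : ITl N NC NR (Γ₁ ++ Γ₂)),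
      ¬ reall M (Γ₁ ++ Γ₂) γ := by
    intro M γ h
    obtain ⟨hg1, hg2⟩ := reall_split M Γ₁ Γ₂ γ h
    have hC := realc_sound M C t _ (h₁ M _ hg1)
    have hnC := realc_sound M (.neg C) t _ (h₂ M _ hg2)
    exact hnC hC
  exact ⟨key, fun Φ M γ h => absurd h (key M γ)⟩

end ITSem
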